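/- Let P be a two-user q-ary input multiple-access channel (q prime). Then for each α ∈ {1, 2, 12}: I⁽α⁾(P⁻) ≤ I⁽α⁾(P) ≤ I⁽α⁾(P⁺). In particular 𝕀(P⁻) ⊆ 𝕀(P) ⊆ 𝕀(P⁺). -/

import Mathlib

open Finset

namespace PolarMAC

/-- A two-user `q`-ary input multiple-access channel: an arbitrary finite output
alphabet `Y` together with transition probabilities `P x w y = P(y | x, w)`. -/
structure MAC (q : ℕ) where
  Y : Type
  [fintypeY : Fintype Y]
  P : ZMod q → ZMod q → Y → ℝ

attribute [instance] MAC.fintypeY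

/-- `M` is a genuine MAC: entries nonnegative and rows summing to one. -/
def IsMAC {q : ℕ} [Fact (Nat.Prime q)] (M : MAC q) : Prop :=
  (∀ x w y, 0 ≤ M.P x w y) ∧ ∀ x w, ∑ y, M.P x w y = 1

/-- Entropy (base `q`) of a pmf on a finite type. -/
noncomputable def Hq (q : ℕ) {α : Type*} [Fintype α] (p : α → ℝ) : ℝ :=
  ∑ a, -(p a * Real.logb q (p a))

/-- Mutual information (base `q`) between the two coordinates of a joint pmf. -/
noncomputable def MIq (q : ℕ) {α β : Type*} [Fintype α] [Fintype β] (p : α → β → ℝ) : ℝ :=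
  Hq q (fun a => ∑ b, p a b) + Hq q (fun b => ∑ a, p a b) - Hq q (fun ab : α × β => p ab.1 ab.2)

variable (q : ℕ) [Fact (Nat.Prime q)]

/-- `I⁽¹⁾(P) = I(X; Y W)` for independent uniform inputs. -/
noncomputable def I1 (M : MAC q) : ℝ :=
  MIq q (fun (x : ZMod q) (wy : ZMod q × M.Y) => M.P x wy.1 wy.2 / (q : ℝ) ^ 2)

/-- `I⁽²⁾(P) = I(W; Y X)` for independent uniform inputs. -/
noncomputable def I2 (M : MAC q) : ℝ :=
  MIq q (fun (w : ZMod q) (xy : ZMod q × M.Y) => M.P xy.1 w xy.2 / (q : ℝ) ^ 2)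

/-- `I⁽¹²⁾(P) = I(X W; Y)` for independent uniform inputs. -/
noncomputable def I12 (M : MAC q) : ℝ :=
  MIq q (fun (xw : ZMod q × ZMod q) (y : M.Y) => M.P xw.1 xw.2 y / (q : ℝ) ^ 2)

/-- `K(P) = (I⁽¹⁾(P), I⁽²⁾(P), I⁽¹²⁾(P)) ∈ ℝ³`, with the Euclidean norm. -/
noncomputable def Kvec (M : MAC q) : EuclideanSpace ℝ (Fin 3) :=
  WithLp.toLp 2 ![I1 q M, I2 q M, I12 q M]

/-- The transform `P⁻(y₁,y₂ | u₁,v₁) = q⁻² ∑_{u₂,v₂} P(y₁|u₁+u₂, v₁+v₂) P(y₂|u₂,v₂)`. -/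
noncomputable def minusT (M : MAC q) : MAC q where
  Y := M.Y × M.Y
  P := fun u₁ v₁ y =>
    ((q : ℝ) ^ 2)⁻¹ * ∑ u₂, ∑ v₂, M.P (u₁ + u₂) (v₁ + v₂) y.1 * M.P u₂ v₂ y.2

/-- The transform `P⁺(y₁,y₂,u₁,v₁ | u₂,v₂) = q⁻² P(y₁|u₁+u₂, v₁+v₂) P(y₂|u₂,v₂)`,
with output `((y₁, y₂), (u₁, v₁))`. -/
noncomputable def plusT (M : MAC q) : MAC q where
  Y := (M.Y × M.Y) × ZMod q × ZMod q
  P := fun u₂ v₂ z =>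
    ((q : ℝ) ^ 2)⁻¹ * (M.P (z.2.1 + u₂) (z.2.2 + v₂) z.1.1 * M.P u₂ v₂ z.1.2)


/-- The uniform-input rate region
`𝕀(P) = {(R₁,R₂) : 0 ≤ R₁ ≤ I⁽¹⁾(P), 0 ≤ R₂ ≤ I⁽²⁾(P), R₁+R₂ ≤ I⁽¹²⁾(P)}`. -/
noncomputable def rateRegion (M : MAC q) : Set (ℝ × ℝ) :=
  {r : ℝ × ℝ | 0 ≤ r.1 ∧ r.1 ≤ I1 q M ∧ 0 ≤ r.2 ∧ r.2 ≤ I2 q M ∧ r.1 + r.2 ≤ I12 q M}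


section Lemmas
variable {α β γ β' γ' : Type*} [Fintype α] [Fintype β] [Fintype γ] [Fintype β'] [Fintype γ']

lemma negMulLogb_mul (q : ℕ) (x y : ℝ) :
    x * y * Real.logb q (x * y) = y * (x * Real.logb q x) + x * (y * Real.logb q y) := by
  rcases eq_or_ne x 0 with rfl|hx
  · simp
  rcases eq_or_ne y 0 with rfl|hy
  · simp
  rw [Real.logb_mul hx hy]; ring

lemma Hq_prod (q : ℕ) (p : α → ℝ) (r : β → ℝ) :
    Hq q (fun x : α × β => p x.1 * r x.2) = (∑ b, r b) * Hq q p + (∑ a, p a) * Hq q r := by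
  unfold Hq
  rw [Fintype.sum_prod_type]
  have h : ∀ a b, -(p a * r b * Real.logb q (p a * r b))
      = r b * -(p a * Real.logb q (p a)) + p a * -(r b * Real.logb q (r b)) := by
    intro a b; rw [negMulLogb_mul q]; ring
  have key : ∀ (C : α → ℝ) (D : β → ℝ),
      ∑ a, ∑ b, (r b * C a + p a * D b)
        = (∑ b, r b) * (∑ a, C a) + (∑ a, p a) * (∑ b, D b) := by
    intro C D
    simp_rw [Finset.sum_add_distrib]
    congr 1
    · rw [Finset.sum_comm]
      simp_rw [← Finset.mul_sum]
      rw [← Finset.sum_mul]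
    · simp_rw [← Finset.mul_sum]
      rw [← Finset.sum_mul]
  simp_rw [h]
  exact key _ _

lemma Hq_comp_equiv (q : ℕ) (p : α → ℝ) (e : β ≃ α) :
    Hq q (fun b => p (e b)) = Hq q p :=
  Fintype.sum_equiv e _ _ (fun _ => rfl)

lemma MIq_comp_equiv_right (q : ℕ) (p : α → β → ℝ) (e : β' ≃ β) :
    MIq q (fun a b' => p a (e b')) = MIq q p := by
  unfold MIq
  have h1 : (fun a => ∑ b', p a (e b')) = fun a => ∑ b, p a b := by
    funext a; exact Equiv.sum_comp e (p a)
  rw [h1]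
  congr 1
  · congr 1
    exact Hq_comp_equiv q (fun b => ∑ a, p a b) e
  · exact Hq_comp_equiv q (fun ab : α × β => p ab.1 ab.2) ((Equiv.refl α).prodCongr e)

lemma MIq_shift (q : ℕ) (p : α → β → ℝ) (σ : β → α ≃ α)
    (h : ∀ a, ∑ b, p (σ b a) b = ∑ b, p a b) :
    MIq q (fun a b => p (σ b a) b) = MIq q p := by
  unfold MIq
  have h1 : (fun a => ∑ b, p (σ b a) b) = fun a => ∑ b, p a b := funext h
  have h2 : (fun b => ∑ a, p (σ b a) b) = fun b => ∑ a, p a b := by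
    funext b; exact Equiv.sum_comp (σ b) (fun a => p a b)
  rw [h1, h2]
  congr 1
  exact Fintype.sum_equiv
    ⟨fun x => (σ x.2 x.1, x.2), fun x => ((σ x.2).symm x.1, x.2),
      fun x => by simp, fun x => by simp⟩ _ _ (fun _ => rfl)

lemma MIq_prod_right (q : ℕ) (f : α → β → ℝ) (g : γ → ℝ) (hg : ∑ c, g c = 1) :
    MIq q (fun a (bc : β × γ) => f a bc.1 * g bc.2) = MIq q f := by
  unfold MIq
  have hrow : (fun a => ∑ bc : β × γ, f a bc.1 * g bc.2) = fun a => ∑ b, f a b := by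
    funext a
    rw [Fintype.sum_prod_type]
    simp_rw [← Finset.mul_sum, hg, mul_one]
  have hcol : Hq q (fun bc : β × γ => ∑ a, f a bc.1 * g bc.2)
      = Hq q (fun b => ∑ a, f a b) + (∑ a, ∑ b, f a b) * Hq q g := by
    have : (fun bc : β × γ => ∑ a, f a bc.1 * g bc.2)
        = fun bc : β × γ => (∑ a, f a bc.1) * g bc.2 := by
      funext bc; rw [Finset.sum_mul]
    rw [this, Hq_prod q (fun b => ∑ a, f a b) g, hg, one_mul]
    congr 2
    rw [Finset.sum_comm]
  have hjoint : Hq q (fun x : α × β × γ => f x.1 x.2.1 * g x.2.2)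
      = Hq q (fun ab : α × β => f ab.1 ab.2) + (∑ a, ∑ b, f a b) * Hq q g := by
    have := Hq_comp_equiv q (fun x : α × β × γ => f x.1 x.2.1 * g x.2.2)
      (Equiv.prodAssoc α β γ)
    rw [← this]
    have h2 : (fun y : (α × β) × γ => f ((Equiv.prodAssoc α β γ) y).1
        ((Equiv.prodAssoc α β γ) y).2.1 * g ((Equiv.prodAssoc α β γ) y).2.2)
        = fun y : (α × β) × γ => (fun ab : α × β => f ab.1 ab.2) y.1 * g y.2 := rfl
    rw [h2, Hq_prod q (fun ab : α × β => f ab.1 ab.2) g, hg, one_mul]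
    congr 2
    rw [Fintype.sum_prod_type]
  rw [hrow, hcol, hjoint]
  ring

end Lemmas

section Lemmas2
variable {α β γ : Type*} [Fintype α] [Fintype β] [Fintype γ]

lemma sum_comm3 {f : α → β → γ → ℝ} :
    ∑ a, ∑ b, ∑ c, f a b c = ∑ b, ∑ c, ∑ a, f a b c := by
  rw [Finset.sum_comm]
  exact Finset.sum_congr rfl fun b _ => Finset.sum_comm

lemma Hq_eq_log (q : ℕ) (f : α → ℝ) :
    Hq q f = -(∑ a, f a * Real.log (f a)) / Real.log q := by
  unfold Hq
  have h : ∀ a, -(f a * (Real.log (f a) / Real.log q)) = -(f a * Real.log (f a)) / Real.log q :=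
    fun a => by ring
  simp_rw [← Real.log_div_log, h, ← Finset.sum_div, Finset.sum_neg_distrib]

lemma MIq_marg_le (q : ℕ) (hq : 1 < q) (p : α → β × γ → ℝ)
    (h0 : ∀ a bc, 0 ≤ p a bc) (h1 : ∑ a, ∑ bc : β × γ, p a bc = 1) :
    MIq q (fun a b => ∑ c, p a (b, c)) ≤ MIq q p := by
  have hLq : 0 < Real.log q := Real.log_pos (by exact_mod_cast hq)
  set L : ℝ → ℝ := Real.log with hL
  set pab : α → β → ℝ := fun a b => ∑ c, p a (b, c) with hpab
  set pbc : β → γ → ℝ := fun b c => ∑ a, p a (b, c) with hpbc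
  set pb : β → ℝ := fun b => ∑ a, pab a b with hpb
  have hpab0 : ∀ a b, 0 ≤ pab a b := fun a b =>
    Finset.sum_nonneg fun c _ => h0 a (b, c)
  have hpbc0 : ∀ b c, 0 ≤ pbc b c := fun b c =>
    Finset.sum_nonneg fun a _ => h0 a (b, c)
  have hpb0 : ∀ b, 0 ≤ pb b := fun b => Finset.sum_nonneg fun a _ => hpab0 a b
  have hp1 : ∑ a, ∑ b, ∑ c, p a (b, c) = 1 := by
    rw [← h1]; exact Finset.sum_congr rfl fun a _ => (Fintype.sum_prod_type _).symm
  have hpbsum : ∑ b, pb b = 1 := by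
    rw [← hp1, Finset.sum_comm]
  have hpbc_sum : ∀ b, ∑ c, pbc b c = pb b := fun b => Finset.sum_comm
  -- the auxiliary pmf r
  set r : α → β → γ → ℝ :=
    fun a b c => if pb b = 0 then 0 else pab a b * pbc b c / pb b with hr
  have hr0 : ∀ a b c, 0 ≤ r a b c := by
    intro a b c
    simp only [hr]
    split
    · exact le_refl 0
    · exact div_nonneg (mul_nonneg (hpab0 a b) (hpbc0 b c)) (hpb0 b)
  -- pointwise Gibbs bound
  have hpoint : ∀ a b c,
      p a (b, c) * (L (pab a b) + L (pbc b c) - L (pb b)) - p a (b, c) * L (p a (b, c))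
        ≤ r a b c - p a (b, c) := by
    intro a b c
    rcases eq_or_lt_of_le (h0 a (b, c)) with hA | hA
    · rw [← hA]; simpa using hr0 a b c
    · have hab : 0 < pab a b :=
        lt_of_lt_of_le hA (Finset.single_le_sum (fun c' _ => h0 a (b, c')) (Finset.mem_univ c))
      have hbc : 0 < pbc b c :=
        lt_of_lt_of_le hA (Finset.single_le_sum (fun a' _ => h0 a' (b, c)) (Finset.mem_univ a))
      have hb : 0 < pb b :=
        lt_of_lt_of_le hab (Finset.single_le_sum (fun a' _ => hpab0 a' b) (Finset.mem_univ a))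
      have hR : 0 < pab a b * pbc b c / pb b := div_pos (mul_pos hab hbc) hb
      have hrval : r a b c = pab a b * pbc b c / pb b := if_neg (ne_of_gt hb)
      rw [hrval]
      set R := pab a b * pbc b c / pb b with hRdef
      set A := p a (b, c) with hAdef
      have hlog : L (pab a b) + L (pbc b c) - L (pb b) - L A = L (R / A) := by
        rw [hL]
        rw [Real.log_div (ne_of_gt hR) (ne_of_gt hA), hRdef,
          Real.log_div (ne_of_gt (mul_pos hab hbc)) (ne_of_gt hb),
          Real.log_mul (ne_of_gt hab) (ne_of_gt hbc)]
      have key : A * L (R / A) ≤ R - A := by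
        have h1 : L (R / A) ≤ R / A - 1 := Real.log_le_sub_one_of_pos (div_pos hR hA)
        have h2 : A * L (R / A) ≤ A * (R / A - 1) :=
          mul_le_mul_of_nonneg_left h1 (le_of_lt hA)
        have h3 : A * (R / A - 1) = R - A := by
          field_simp
        linarith
      calc A * (L (pab a b) + L (pbc b c) - L (pb b)) - A * L A
          = A * (L (pab a b) + L (pbc b c) - L (pb b) - L A) := by ring
        _ = A * L (R / A) := by rw [hlog]
        _ ≤ R - A := key
  -- sum of r is at most 1
  have hrsum : ∑ a, ∑ b, ∑ c, r a b c ≤ 1 := by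
    have h' : ∑ a, ∑ b, ∑ c, r a b c = ∑ b, if pb b = 0 then 0 else pb b := by
      rw [sum_comm3]
      refine Finset.sum_congr rfl fun b _ => ?_
      by_cases hb : pb b = 0
      · simp [hr, hb]
      · simp only [hr, if_neg hb]
        have : ∀ c, ∑ a, pab a b * pbc b c / pb b = pb b * pbc b c / pb b := by
          intro c
          rw [← Finset.sum_div, ← Finset.sum_mul]
        simp_rw [this]
        rw [← Finset.sum_div, ← Finset.mul_sum, hpbc_sum b]
        field_simp
    rw [h']
    calc ∑ b, (if pb b = 0 then 0 else pb b) ≤ ∑ b, pb b := by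
          refine Finset.sum_le_sum fun b _ => ?_
          by_cases hb : pb b = 0 <;> simp [hb]
      _ = 1 := hpbsum
  -- summed Gibbs bound
  have hsummed : ∑ a, ∑ b, ∑ c,
      (p a (b, c) * (L (pab a b) + L (pbc b c) - L (pb b)) - p a (b, c) * L (p a (b, c)))
        ≤ 0 := by
    have step : ∑ a, ∑ b, ∑ c,
        (p a (b, c) * (L (pab a b) + L (pbc b c) - L (pb b)) - p a (b, c) * L (p a (b, c)))
          ≤ ∑ a, ∑ b, ∑ c, (r a b c - p a (b, c)) := by
      refine Finset.sum_le_sum fun a _ => ?_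
      refine Finset.sum_le_sum fun b _ => ?_
      refine Finset.sum_le_sum fun c _ => ?_
      exact hpoint a b c
    have split : ∑ a, ∑ b, ∑ c, (r a b c - p a (b, c))
        = (∑ a, ∑ b, ∑ c, r a b c) - ∑ a, ∑ b, ∑ c, p a (b, c) := by
      simp_rw [Finset.sum_sub_distrib]
    rw [split, hp1] at step
    linarith
  -- collapse identities
  have e1 : ∑ a, ∑ b, ∑ c, p a (b, c) * L (pab a b) = ∑ a, ∑ b, pab a b * L (pab a b) := by
    refine Finset.sum_congr rfl fun a _ => Finset.sum_congr rfl fun b _ => ?_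
    rw [← Finset.sum_mul]
  have e2 : ∑ a, ∑ b, ∑ c, p a (b, c) * L (pbc b c) = ∑ b, ∑ c, pbc b c * L (pbc b c) := by
    rw [sum_comm3]
    refine Finset.sum_congr rfl fun b _ => Finset.sum_congr rfl fun c _ => ?_
    rw [← Finset.sum_mul]
  have e3 : ∑ a, ∑ b, ∑ c, p a (b, c) * L (pb b) = ∑ b, pb b * L (pb b) := by
    rw [Finset.sum_comm]
    refine Finset.sum_congr rfl fun b _ => ?_
    simp_rw [← Finset.sum_mul]
    rfl
  have expand : ∑ a, ∑ b, ∑ c,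
      (p a (b, c) * (L (pab a b) + L (pbc b c) - L (pb b)) - p a (b, c) * L (p a (b, c)))
      = (∑ a, ∑ b, ∑ c, p a (b, c) * L (pab a b))
        + (∑ a, ∑ b, ∑ c, p a (b, c) * L (pbc b c))
        - (∑ a, ∑ b, ∑ c, p a (b, c) * L (pb b))
        - ∑ a, ∑ b, ∑ c, p a (b, c) * L (p a (b, c)) := by
    simp_rw [mul_sub, mul_add, Finset.sum_sub_distrib, Finset.sum_add_distrib]
  -- final entropy comparison
  have main : ∑ a, ∑ b, pab a b * L (pab a b) + ∑ b, ∑ c, pbc b c * L (pbc b c)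
      ≤ ∑ a, ∑ b, ∑ c, p a (b, c) * L (p a (b, c)) + ∑ b, pb b * L (pb b) := by
    rw [expand, e1, e2, e3] at hsummed
    linarith
  -- now convert the MIq goal
  unfold MIq
  simp only [Hq_eq_log]
  rw [← add_div, ← sub_div, ← add_div, ← sub_div,
    div_le_div_iff_of_pos_right hLq]
  have m1' : ∀ a, (∑ b, pab a b) = ∑ bc : β × γ, p a bc :=
    fun a => (Fintype.sum_prod_type _).symm
  have hpb' : ∀ b, (∑ a, pab a b) = pb b := fun _ => rfl
  have j1 : (∑ x : α × β, pab x.1 x.2 * L (pab x.1 x.2))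
      = ∑ a, ∑ b, pab a b * L (pab a b) := Fintype.sum_prod_type _
  have j2 : (∑ x : β × γ, (∑ a, p a x) * L (∑ a, p a x))
      = ∑ b, ∑ c, pbc b c * L (pbc b c) := Fintype.sum_prod_type _
  have j3 : (∑ x : α × (β × γ), p x.1 x.2 * L (p x.1 x.2))
      = ∑ a, ∑ b, ∑ c, p a (b, c) * L (p a (b, c)) := by
    rw [Fintype.sum_prod_type]
    exact Finset.sum_congr rfl fun a _ => Fintype.sum_prod_type _
  simp_rw [m1', hpb']
  rw [j1, j2, j3]
  linarith [main]

end Lemmas2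


section Keys
variable {α β γ β' γ' : Type*} [Fintype α] [Fintype β] [Fintype γ] [Fintype β'] [Fintype γ']

lemma key_le (q : ℕ) (hq : 1 < q)
    (p : α → β × γ → ℝ) (h0 : ∀ a bc, 0 ≤ p a bc) (h1 : ∑ a, ∑ bc : β × γ, p a bc = 1)
    (σ : β × γ → α ≃ α) (hσ : ∀ a, ∑ bc : β × γ, p (σ bc a) bc = ∑ bc : β × γ, p a bc)
    (f : α → β' → ℝ) (g : γ' → ℝ) (hg : ∑ c, g c = 1)
    (e : β' × γ' ≃ β × γ)
    (hfac : ∀ a bc', p (σ (e bc') a) (e bc') = f a bc'.1 * g bc'.2) :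
    MIq q (fun a b => ∑ c, p a (b, c)) ≤ MIq q f := by
  have h2 : MIq q (fun a bc => p (σ bc a) bc) = MIq q p := MIq_shift q p σ hσ
  have h3 : MIq q (fun a bc' => p (σ (e bc') a) (e bc'))
      = MIq q (fun a bc => p (σ bc a) bc) :=
    MIq_comp_equiv_right q (fun a bc => p (σ bc a) bc) e
  have h4 : MIq q (fun a bc' => p (σ (e bc') a) (e bc')) = MIq q f := by
    rw [show (fun a bc' => p (σ (e bc') a) (e bc'))
        = fun a (bc' : β' × γ') => f a bc'.1 * g bc'.2 from
      funext fun a => funext fun bc' => hfac a bc']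
    exact MIq_prod_right q f g hg
  calc MIq q (fun a b => ∑ c, p a (b, c)) ≤ MIq q p := MIq_marg_le q hq p h0 h1
    _ = MIq q f := by rw [← h2, ← h3, h4]

lemma key_ge (q : ℕ) (hq : 1 < q)
    (p : α → β → ℝ) (h0 : ∀ a b, 0 ≤ p a b) (h1 : ∑ a, ∑ b, p a b = 1)
    (e : β' × γ' ≃ β) (f : α → β' → ℝ)
    (hf : ∀ a b', f a b' = ∑ c', p a (e (b', c'))) :
    MIq q f ≤ MIq q p := by
  have h0' : ∀ (a : α) (bc' : β' × γ'), 0 ≤ p a (e bc') := fun a bc' => h0 a _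
  have h1' : ∑ a, ∑ bc' : β' × γ', p a (e bc') = 1 := by
    rw [← h1]
    exact Finset.sum_congr rfl fun a _ => Equiv.sum_comp e (p a)
  have step := MIq_marg_le q hq (fun a bc' => p a (e bc')) h0' h1'
  have heq : MIq q (fun a bc' => p a (e bc')) = MIq q p := MIq_comp_equiv_right q p e
  have hfeq : f = fun a b' => ∑ c', p a (e (b', c')) :=
    funext fun a => funext fun b' => hf a b'
  rw [hfeq]
  exact le_of_le_of_eq step heq

end Keys


section Apps

variable {M : MAC q}

lemma sum_const_Z (r : ℝ) : ∑ _u : ZMod q, r = (q : ℝ) * r := by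
  rw [Finset.sum_const, Finset.card_univ, ZMod.card, nsmul_eq_mul]

lemma sum_const_Z2 (r : ℝ) : ∑ _uv : ZMod q × ZMod q, r = (q : ℝ) ^ 2 * r := by
  rw [Finset.sum_const, Finset.card_univ, Fintype.card_prod, ZMod.card, nsmul_eq_mul]
  push_cast
  ring

lemma sumY (hM : IsMAC M) (x w : ZMod q) (r : ℝ) :
    ∑ y, r * M.P x w y = r := by
  rw [← Finset.mul_sum, hM.2, mul_one]

lemma sumYY (hM : IsMAC M) (x w x' w' : ZMod q) (r : ℝ) :
    ∑ y : M.Y × M.Y, r * (M.P x w y.1 * M.P x' w' y.2) = r := by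
  rw [Fintype.sum_prod_type]
  have h : ∀ y1 y2, r * (M.P x w y1 * M.P x' w' y2)
      = r * M.P x w y1 * M.P x' w' y2 := fun _ _ => by ring
  simp_rw [h, ← Finset.mul_sum, hM.2, mul_one]
  exact sumY q hM x w r


lemma I12_minus (hM : IsMAC M) : I12 q (minusT q M) ≤ I12 q M := by
  have hq : 1 < q := (Fact.out : Nat.Prime q).one_lt
  have hq0 : (0 : ℝ) < (q : ℝ) := by exact_mod_cast Nat.lt_of_lt_of_le Nat.zero_lt_one hq.le
  have hqne : ((q : ℝ) ^ 2) ≠ 0 := by positivity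
  set r0 : ℝ := ((q : ℝ) ^ 2)⁻¹ * ((q : ℝ) ^ 2)⁻¹ with hr0
  have hr0nn : (0 : ℝ) ≤ r0 := by rw [hr0]; positivity
  set p : (ZMod q × ZMod q) → ((M.Y × M.Y) × (ZMod q × ZMod q)) → ℝ :=
    fun a bc => r0 * (M.P (a.1 + bc.2.1) (a.2 + bc.2.2) bc.1.1 * M.P bc.2.1 bc.2.2 bc.1.2)
    with hpdef
  have h0 : ∀ a bc, 0 ≤ p a bc := fun a bc =>
    mul_nonneg hr0nn (mul_nonneg (hM.1 _ _ _) (hM.1 _ _ _))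
  have hsum1 : ∀ a : ZMod q × ZMod q,
      ∑ bc : (M.Y × M.Y) × (ZMod q × ZMod q), p a bc = ((q : ℝ) ^ 2)⁻¹ := by
    intro a
    simp only [hpdef]
    rw [Fintype.sum_prod_type]
    dsimp only
    rw [Finset.sum_comm]
    have h : ∀ uv : ZMod q × ZMod q, ∑ y : M.Y × M.Y,
        r0 * (M.P (a.1 + uv.1) (a.2 + uv.2) y.1 * M.P uv.1 uv.2 y.2) = r0 :=
      fun uv => sumYY q hM _ _ _ _ r0
    simp_rw [h, sum_const_Z2, hr0]
    field_simp
  have h1 : ∑ a, ∑ bc : (M.Y × M.Y) × (ZMod q × ZMod q), p a bc = 1 := by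
    simp_rw [hsum1, sum_const_Z2]
    field_simp
  set σ : (M.Y × M.Y) × (ZMod q × ZMod q) → (ZMod q × ZMod q) ≃ (ZMod q × ZMod q) :=
    fun bc => (Equiv.subRight bc.2.1).prodCongr (Equiv.subRight bc.2.2) with hσdef
  have hshift : ∀ (a : ZMod q × ZMod q) bc,
      p (σ bc a) bc = r0 * (M.P a.1 a.2 bc.1.1 * M.P bc.2.1 bc.2.2 bc.1.2) := by
    intro a bc
    show r0 * (M.P (a.1 - bc.2.1 + bc.2.1) (a.2 - bc.2.2 + bc.2.2) bc.1.1
        * M.P bc.2.1 bc.2.2 bc.1.2) = _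
    rw [sub_add_cancel, sub_add_cancel]
  have hσ : ∀ a, ∑ bc : (M.Y × M.Y) × (ZMod q × ZMod q), p (σ bc a) bc
      = ∑ bc : (M.Y × M.Y) × (ZMod q × ZMod q), p a bc := by
    intro a
    rw [hsum1 a]
    simp_rw [hshift a]
    rw [Fintype.sum_prod_type, Finset.sum_comm]
    have h : ∀ uv : ZMod q × ZMod q,
        ∑ y : M.Y × M.Y, r0 * (M.P a.1 a.2 y.1 * M.P uv.1 uv.2 y.2) = r0 :=
      fun uv => sumYY q hM _ _ _ _ r0
    simp_rw [h, sum_const_Z2, hr0]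
    field_simp
  set f : (ZMod q × ZMod q) → M.Y → ℝ := fun xw y => M.P xw.1 xw.2 y / (q : ℝ) ^ 2 with hfdef
  set g : M.Y × (ZMod q × ZMod q) → ℝ :=
    fun yu => ((q : ℝ) ^ 2)⁻¹ * M.P yu.2.1 yu.2.2 yu.1 with hgdef
  have hg : ∑ c, g c = 1 := by
    rw [Fintype.sum_prod_type, Finset.sum_comm]
    have h : ∀ uv : ZMod q × ZMod q, ∑ y, ((q : ℝ) ^ 2)⁻¹ * M.P uv.1 uv.2 y
        = ((q : ℝ) ^ 2)⁻¹ := fun uv => sumY q hM _ _ _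
    simp_rw [hgdef, h, sum_const_Z2]
    field_simp
  set e : (M.Y × (M.Y × (ZMod q × ZMod q))) ≃ ((M.Y × M.Y) × (ZMod q × ZMod q)) :=
    ⟨fun x => ((x.1, x.2.1), x.2.2), fun z => (z.1.1, (z.1.2, z.2)),
      fun x => rfl, fun z => rfl⟩ with hedef
  have hfac : ∀ a bc', p (σ (e bc') a) (e bc') = f a bc'.1 * g bc'.2 := by
    intro a bc'
    obtain ⟨y1, y2, uv⟩ := bc'
    have he : e (y1, y2, uv) = ((y1, y2), uv) := rfl
    rw [he, hshift]
    simp only [hfdef, hgdef, hr0]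
    rw [div_eq_mul_inv]
    ring
  have heq : I12 q (minusT q M) = MIq q (fun a b => ∑ cc, p a (b, cc)) := by
    show MIq q (fun (a : ZMod q × ZMod q) (b : M.Y × M.Y) =>
      (minusT q M).P a.1 a.2 b / (q : ℝ) ^ 2) = _
    congr 1
    funext a b
    show (((q : ℝ) ^ 2)⁻¹ * ∑ u₂, ∑ v₂, M.P (a.1 + u₂) (a.2 + v₂) b.1 * M.P u₂ v₂ b.2)
        / (q : ℝ) ^ 2 = _
    rw [Fintype.sum_prod_type]
    simp_rw [hpdef, ← Finset.mul_sum]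
    rw [hr0, div_eq_mul_inv]
    ring
  calc I12 q (minusT q M) = MIq q (fun a b => ∑ cc, p a (b, cc)) := heq
    _ ≤ MIq q f := key_le q hq p h0 h1 σ hσ f g hg e hfac
    _ = I12 q M := rfl


lemma I12_plus (hM : IsMAC M) : I12 q M ≤ I12 q (plusT q M) := by
  have hq : 1 < q := (Fact.out : Nat.Prime q).one_lt
  have hq0 : (0 : ℝ) < (q : ℝ) := by exact_mod_cast Nat.lt_of_lt_of_le Nat.zero_lt_one hq.le
  have hqne : ((q : ℝ) ^ 2) ≠ 0 := by positivity
  set r0 : ℝ := ((q : ℝ) ^ 2)⁻¹ * ((q : ℝ) ^ 2)⁻¹ with hr0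
  have hr0nn : (0 : ℝ) ≤ r0 := by rw [hr0]; positivity
  set p : (ZMod q × ZMod q) → ((M.Y × M.Y) × (ZMod q × ZMod q)) → ℝ :=
    fun a z => r0 * (M.P (z.2.1 + a.1) (z.2.2 + a.2) z.1.1 * M.P a.1 a.2 z.1.2) with hpdef
  have h0 : ∀ a z, 0 ≤ p a z := fun a z =>
    mul_nonneg hr0nn (mul_nonneg (hM.1 _ _ _) (hM.1 _ _ _))
  have hsum1 : ∀ a : ZMod q × ZMod q,
      ∑ z : (M.Y × M.Y) × (ZMod q × ZMod q), p a z = ((q : ℝ) ^ 2)⁻¹ := by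
    intro a
    simp only [hpdef]
    rw [Fintype.sum_prod_type]
    dsimp only
    rw [Finset.sum_comm]
    have h : ∀ uv : ZMod q × ZMod q, ∑ y : M.Y × M.Y,
        r0 * (M.P (uv.1 + a.1) (uv.2 + a.2) y.1 * M.P a.1 a.2 y.2) = r0 :=
      fun uv => sumYY q hM _ _ _ _ r0
    simp_rw [h, sum_const_Z2, hr0]
    field_simp
  have h1 : ∑ a, ∑ z : (M.Y × M.Y) × (ZMod q × ZMod q), p a z = 1 := by
    simp_rw [hsum1, sum_const_Z2]
    field_simp
  set e : (M.Y × (M.Y × (ZMod q × ZMod q))) ≃ ((M.Y × M.Y) × (ZMod q × ZMod q)) :=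
    ⟨fun x => ((x.2.1, x.1), x.2.2), fun z => (z.1.2, (z.1.1, z.2)),
      fun x => rfl, fun z => rfl⟩ with hedef
  set f : (ZMod q × ZMod q) → M.Y → ℝ := fun xw y => M.P xw.1 xw.2 y / (q : ℝ) ^ 2 with hfdef
  have hf : ∀ a y2, f a y2 = ∑ c' : M.Y × (ZMod q × ZMod q), p a (e (y2, c')) := by
    intro a y2
    have he : ∀ c' : M.Y × (ZMod q × ZMod q), e (y2, c') = ((c'.1, y2), c'.2) := fun _ => rfl
    simp only [he, hpdef]
    rw [Fintype.sum_prod_type]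
    dsimp only
    rw [Finset.sum_comm]
    have h : ∀ uv : ZMod q × ZMod q, ∑ y1 : M.Y,
        r0 * (M.P (uv.1 + a.1) (uv.2 + a.2) y1 * M.P a.1 a.2 y2)
          = r0 * M.P a.1 a.2 y2 := by
      intro uv
      have hh : ∀ y1, r0 * (M.P (uv.1 + a.1) (uv.2 + a.2) y1 * M.P a.1 a.2 y2)
          = (r0 * M.P a.1 a.2 y2) * M.P (uv.1 + a.1) (uv.2 + a.2) y1 := fun _ => by ring
      simp_rw [hh, ← Finset.mul_sum, hM.2, mul_one]
    simp_rw [h, sum_const_Z2, hr0, hfdef]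
    field_simp
  have hpeq : I12 q (plusT q M) = MIq q p := by
    show MIq q (fun (a : ZMod q × ZMod q) (z : (M.Y × M.Y) × (ZMod q × ZMod q)) =>
      (plusT q M).P a.1 a.2 z / (q : ℝ) ^ 2) = _
    congr 1
    funext a z
    show (((q : ℝ) ^ 2)⁻¹ * (M.P (z.2.1 + a.1) (z.2.2 + a.2) z.1.1 * M.P a.1 a.2 z.1.2))
        / (q : ℝ) ^ 2 = _
    simp only [hpdef, hr0]
    rw [div_eq_mul_inv]
    ring
  calc I12 q M = MIq q f := rfl
    _ ≤ MIq q p := key_ge q hq p h0 h1 e f hf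
    _ = I12 q (plusT q M) := hpeq.symm


lemma I1_minus (hM : IsMAC M) : I1 q (minusT q M) ≤ I1 q M := by
  have hq : 1 < q := (Fact.out : Nat.Prime q).one_lt
  have hq0 : (0 : ℝ) < (q : ℝ) := by exact_mod_cast Nat.lt_of_lt_of_le Nat.zero_lt_one hq.le
  have hqne : ((q : ℝ) ^ 2) ≠ 0 := by positivity
  have hqne' : (q : ℝ) ≠ 0 := ne_of_gt hq0
  set r0 : ℝ := ((q : ℝ) ^ 2)⁻¹ * ((q : ℝ) ^ 2)⁻¹ with hr0
  have hr0nn : (0 : ℝ) ≤ r0 := by rw [hr0]; positivity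
  set p : ZMod q → ((ZMod q × (M.Y × M.Y)) × (ZMod q × ZMod q)) → ℝ :=
    fun u1 b => r0 * (M.P (u1 + b.2.1) (b.1.1 + b.2.2) b.1.2.1 * M.P b.2.1 b.2.2 b.1.2.2)
    with hpdef
  have h0 : ∀ a b, 0 ≤ p a b := fun a b =>
    mul_nonneg hr0nn (mul_nonneg (hM.1 _ _ _) (hM.1 _ _ _))
  have hsum1 : ∀ a : ZMod q,
      ∑ b : (ZMod q × (M.Y × M.Y)) × (ZMod q × ZMod q), p a b = (q : ℝ)⁻¹ := by
    intro a
    simp only [hpdef]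
    rw [Fintype.sum_prod_type]
    dsimp only
    rw [Finset.sum_comm]
    have h2 : ∀ uv : ZMod q × ZMod q, ∑ vy : ZMod q × (M.Y × M.Y),
        r0 * (M.P (a + uv.1) (vy.1 + uv.2) vy.2.1 * M.P uv.1 uv.2 vy.2.2)
          = (q : ℝ) * r0 := by
      intro uv
      rw [Fintype.sum_prod_type]
      dsimp only
      have h3 : ∀ v1 : ZMod q, ∑ y : M.Y × M.Y,
          r0 * (M.P (a + uv.1) (v1 + uv.2) y.1 * M.P uv.1 uv.2 y.2) = r0 :=
        fun v1 => sumYY q hM _ _ _ _ r0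
      simp_rw [h3, sum_const_Z]
    simp_rw [h2, sum_const_Z2, hr0]
    field_simp
  have h1 : ∑ a, ∑ b : (ZMod q × (M.Y × M.Y)) × (ZMod q × ZMod q), p a b = 1 := by
    simp_rw [hsum1, sum_const_Z]
    field_simp
  set σ : (ZMod q × (M.Y × M.Y)) × (ZMod q × ZMod q) → ZMod q ≃ ZMod q :=
    fun b => Equiv.subRight b.2.1 with hσdef
  have hshift : ∀ (a : ZMod q) b,
      p (σ b a) b = r0 * (M.P a (b.1.1 + b.2.2) b.1.2.1 * M.P b.2.1 b.2.2 b.1.2.2) := by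
    intro a b
    show r0 * (M.P (a - b.2.1 + b.2.1) (b.1.1 + b.2.2) b.1.2.1 * M.P b.2.1 b.2.2 b.1.2.2) = _
    rw [sub_add_cancel]
  have hσ : ∀ a, ∑ b : (ZMod q × (M.Y × M.Y)) × (ZMod q × ZMod q), p (σ b a) b
      = ∑ b : (ZMod q × (M.Y × M.Y)) × (ZMod q × ZMod q), p a b := by
    intro a
    rw [hsum1 a]
    simp_rw [hshift a]
    rw [Fintype.sum_prod_type]
    dsimp only
    rw [Finset.sum_comm]
    have h2 : ∀ uv : ZMod q × ZMod q, ∑ vy : ZMod q × (M.Y × M.Y),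
        r0 * (M.P a (vy.1 + uv.2) vy.2.1 * M.P uv.1 uv.2 vy.2.2) = (q : ℝ) * r0 := by
      intro uv
      rw [Fintype.sum_prod_type]
      dsimp only
      have h3 : ∀ v1 : ZMod q, ∑ y : M.Y × M.Y,
          r0 * (M.P a (v1 + uv.2) y.1 * M.P uv.1 uv.2 y.2) = r0 :=
        fun v1 => sumYY q hM _ _ _ _ r0
      simp_rw [h3, sum_const_Z]
    simp_rw [h2, sum_const_Z2, hr0]
    field_simp
  set f : ZMod q → (ZMod q × M.Y) → ℝ := fun x wy => M.P x wy.1 wy.2 / (q : ℝ) ^ 2 with hfdef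
  set g : M.Y × (ZMod q × ZMod q) → ℝ :=
    fun yu => ((q : ℝ) ^ 2)⁻¹ * M.P yu.2.1 yu.2.2 yu.1 with hgdef
  have hg : ∑ c, g c = 1 := by
    rw [Fintype.sum_prod_type, Finset.sum_comm]
    have h : ∀ uv : ZMod q × ZMod q, ∑ y, ((q : ℝ) ^ 2)⁻¹ * M.P uv.1 uv.2 y
        = ((q : ℝ) ^ 2)⁻¹ := fun uv => sumY q hM _ _ _
    simp_rw [hgdef, h, sum_const_Z2]
    field_simp
  set e : ((ZMod q × M.Y) × (M.Y × (ZMod q × ZMod q)))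
      ≃ ((ZMod q × (M.Y × M.Y)) × (ZMod q × ZMod q)) :=
    ⟨fun x => ((x.1.1 - x.2.2.2, (x.1.2, x.2.1)), x.2.2),
      fun z => ((z.1.1 + z.2.2, z.1.2.1), (z.1.2.2, z.2)),
      fun x => by obtain ⟨⟨w, y1⟩, ⟨y2, uv⟩⟩ := x; simp,
      fun z => by obtain ⟨⟨v1, ⟨y1, y2⟩⟩, uv⟩ := z; simp⟩ with hedef
  have hfac : ∀ a bc', p (σ (e bc') a) (e bc') = f a bc'.1 * g bc'.2 := by
    intro a bc'
    obtain ⟨⟨w, y1⟩, ⟨y2, uv⟩⟩ := bc'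
    have he : e ((w, y1), (y2, uv)) = ((w - uv.2, (y1, y2)), uv) := rfl
    rw [he, hshift]
    dsimp only
    rw [sub_add_cancel]
    simp only [hfdef, hgdef, hr0]
    rw [div_eq_mul_inv]
    ring
  have heq : I1 q (minusT q M) = MIq q (fun a b => ∑ cc, p a (b, cc)) := by
    show MIq q (fun (x : ZMod q) (wy : ZMod q × (M.Y × M.Y)) =>
      (minusT q M).P x wy.1 wy.2 / (q : ℝ) ^ 2) = _
    congr 1
    funext a b
    show (((q : ℝ) ^ 2)⁻¹ * ∑ u₂, ∑ v₂, M.P (a + u₂) (b.1 + v₂) b.2.1 * M.P u₂ v₂ b.2.2)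
        / (q : ℝ) ^ 2 = _
    rw [Fintype.sum_prod_type]
    simp_rw [hpdef, ← Finset.mul_sum]
    rw [hr0, div_eq_mul_inv]
    ring
  calc I1 q (minusT q M) = MIq q (fun a b => ∑ cc, p a (b, cc)) := heq
    _ ≤ MIq q f := key_le q hq p h0 h1 σ hσ f g hg e hfac
    _ = I1 q M := rfl

lemma I1_plus (hM : IsMAC M) : I1 q M ≤ I1 q (plusT q M) := by
  have hq : 1 < q := (Fact.out : Nat.Prime q).one_lt
  have hq0 : (0 : ℝ) < (q : ℝ) := by exact_mod_cast Nat.lt_of_lt_of_le Nat.zero_lt_one hq.le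
  have hqne : ((q : ℝ) ^ 2) ≠ 0 := by positivity
  have hqne' : (q : ℝ) ≠ 0 := ne_of_gt hq0
  set r0 : ℝ := ((q : ℝ) ^ 2)⁻¹ * ((q : ℝ) ^ 2)⁻¹ with hr0
  have hr0nn : (0 : ℝ) ≤ r0 := by rw [hr0]; positivity
  set p : ZMod q → (ZMod q × ((M.Y × M.Y) × (ZMod q × ZMod q))) → ℝ :=
    fun u2 b => r0 * (M.P (b.2.2.1 + u2) (b.2.2.2 + b.1) b.2.1.1 * M.P u2 b.1 b.2.1.2)
    with hpdef
  have h0 : ∀ a b, 0 ≤ p a b := fun a b =>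
    mul_nonneg hr0nn (mul_nonneg (hM.1 _ _ _) (hM.1 _ _ _))
  have hsum1 : ∀ a : ZMod q,
      ∑ b : ZMod q × ((M.Y × M.Y) × (ZMod q × ZMod q)), p a b = (q : ℝ)⁻¹ := by
    intro a
    simp only [hpdef]
    rw [Fintype.sum_prod_type]
    dsimp only
    have h2 : ∀ v2 : ZMod q, ∑ z : (M.Y × M.Y) × (ZMod q × ZMod q),
        r0 * (M.P (z.2.1 + a) (z.2.2 + v2) z.1.1 * M.P a v2 z.1.2)
          = (q : ℝ) ^ 2 * r0 := by
      intro v2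
      rw [Fintype.sum_prod_type]
      dsimp only
      rw [Finset.sum_comm]
      have h3 : ∀ uv : ZMod q × ZMod q, ∑ y : M.Y × M.Y,
          r0 * (M.P (uv.1 + a) (uv.2 + v2) y.1 * M.P a v2 y.2) = r0 :=
        fun uv => sumYY q hM _ _ _ _ r0
      simp_rw [h3, sum_const_Z2]
    simp_rw [h2, sum_const_Z, hr0]
    field_simp
  have h1 : ∑ a, ∑ b : ZMod q × ((M.Y × M.Y) × (ZMod q × ZMod q)), p a b = 1 := by
    simp_rw [hsum1, sum_const_Z]
    field_simp
  set e : ((ZMod q × M.Y) × (M.Y × (ZMod q × ZMod q)))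
      ≃ (ZMod q × ((M.Y × M.Y) × (ZMod q × ZMod q))) :=
    ⟨fun x => (x.1.1, ((x.2.1, x.1.2), x.2.2)),
      fun b => ((b.1, b.2.1.2), (b.2.1.1, b.2.2)),
      fun x => rfl, fun b => rfl⟩ with hedef
  set f : ZMod q → (ZMod q × M.Y) → ℝ := fun x wy => M.P x wy.1 wy.2 / (q : ℝ) ^ 2 with hfdef
  have hf : ∀ a b', f a b' = ∑ c' : M.Y × (ZMod q × ZMod q), p a (e (b', c')) := by
    intro a b'
    have he : ∀ c' : M.Y × (ZMod q × ZMod q), e (b', c') = (b'.1, ((c'.1, b'.2), c'.2)) :=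
      fun _ => rfl
    simp only [he, hpdef]
    rw [Fintype.sum_prod_type]
    dsimp only
    rw [Finset.sum_comm]
    have h : ∀ uv : ZMod q × ZMod q, ∑ y1 : M.Y,
        r0 * (M.P (uv.1 + a) (uv.2 + b'.1) y1 * M.P a b'.1 b'.2)
          = r0 * M.P a b'.1 b'.2 := by
      intro uv
      have hh : ∀ y1, r0 * (M.P (uv.1 + a) (uv.2 + b'.1) y1 * M.P a b'.1 b'.2)
          = (r0 * M.P a b'.1 b'.2) * M.P (uv.1 + a) (uv.2 + b'.1) y1 := fun _ => by ring
      simp_rw [hh, ← Finset.mul_sum, hM.2, mul_one]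
    simp_rw [h, sum_const_Z2, hr0, hfdef]
    field_simp
  have hpeq : I1 q (plusT q M) = MIq q p := by
    show MIq q (fun (x : ZMod q) (wy : ZMod q × ((M.Y × M.Y) × (ZMod q × ZMod q))) =>
      (plusT q M).P x wy.1 wy.2 / (q : ℝ) ^ 2) = _
    congr 1
    funext a b
    show (((q : ℝ) ^ 2)⁻¹ * (M.P (b.2.2.1 + a) (b.2.2.2 + b.1) b.2.1.1 * M.P a b.1 b.2.1.2))
        / (q : ℝ) ^ 2 = _
    simp only [hpdef, hr0]
    rw [div_eq_mul_inv]
    ring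
  calc I1 q M = MIq q f := rfl
    _ ≤ MIq q p := key_ge q hq p h0 h1 e f hf
    _ = I1 q (plusT q M) := hpeq.symm

lemma I2_minus (hM : IsMAC M) : I2 q (minusT q M) ≤ I2 q M := by
  have hq : 1 < q := (Fact.out : Nat.Prime q).one_lt
  have hq0 : (0 : ℝ) < (q : ℝ) := by exact_mod_cast Nat.lt_of_lt_of_le Nat.zero_lt_one hq.le
  have hqne : ((q : ℝ) ^ 2) ≠ 0 := by positivity
  have hqne' : (q : ℝ) ≠ 0 := ne_of_gt hq0
  set r0 : ℝ := ((q : ℝ) ^ 2)⁻¹ * ((q : ℝ) ^ 2)⁻¹ with hr0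
  have hr0nn : (0 : ℝ) ≤ r0 := by rw [hr0]; positivity
  set p : ZMod q → ((ZMod q × (M.Y × M.Y)) × (ZMod q × ZMod q)) → ℝ :=
    fun v1 b => r0 * (M.P (b.1.1 + b.2.1) (v1 + b.2.2) b.1.2.1 * M.P b.2.1 b.2.2 b.1.2.2)
    with hpdef
  have h0 : ∀ a b, 0 ≤ p a b := fun a b =>
    mul_nonneg hr0nn (mul_nonneg (hM.1 _ _ _) (hM.1 _ _ _))
  have hsum1 : ∀ a : ZMod q,
      ∑ b : (ZMod q × (M.Y × M.Y)) × (ZMod q × ZMod q), p a b = (q : ℝ)⁻¹ := by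
    intro a
    simp only [hpdef]
    rw [Fintype.sum_prod_type]
    dsimp only
    rw [Finset.sum_comm]
    have h2 : ∀ uv : ZMod q × ZMod q, ∑ vy : ZMod q × (M.Y × M.Y),
        r0 * (M.P (vy.1 + uv.1) (a + uv.2) vy.2.1 * M.P uv.1 uv.2 vy.2.2)
          = (q : ℝ) * r0 := by
      intro uv
      rw [Fintype.sum_prod_type]
      dsimp only
      have h3 : ∀ u1 : ZMod q, ∑ y : M.Y × M.Y,
          r0 * (M.P (u1 + uv.1) (a + uv.2) y.1 * M.P uv.1 uv.2 y.2) = r0 :=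
        fun u1 => sumYY q hM _ _ _ _ r0
      simp_rw [h3, sum_const_Z]
    simp_rw [h2, sum_const_Z2, hr0]
    field_simp
  have h1 : ∑ a, ∑ b : (ZMod q × (M.Y × M.Y)) × (ZMod q × ZMod q), p a b = 1 := by
    simp_rw [hsum1, sum_const_Z]
    field_simp
  set σ : (ZMod q × (M.Y × M.Y)) × (ZMod q × ZMod q) → ZMod q ≃ ZMod q :=
    fun b => Equiv.subRight b.2.2 with hσdef
  have hshift : ∀ (a : ZMod q) b,
      p (σ b a) b = r0 * (M.P (b.1.1 + b.2.1) a b.1.2.1 * M.P b.2.1 b.2.2 b.1.2.2) := by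
    intro a b
    show r0 * (M.P (b.1.1 + b.2.1) (a - b.2.2 + b.2.2) b.1.2.1 * M.P b.2.1 b.2.2 b.1.2.2) = _
    rw [sub_add_cancel]
  have hσ : ∀ a, ∑ b : (ZMod q × (M.Y × M.Y)) × (ZMod q × ZMod q), p (σ b a) b
      = ∑ b : (ZMod q × (M.Y × M.Y)) × (ZMod q × ZMod q), p a b := by
    intro a
    rw [hsum1 a]
    simp_rw [hshift a]
    rw [Fintype.sum_prod_type]
    dsimp only
    rw [Finset.sum_comm]
    have h2 : ∀ uv : ZMod q × ZMod q, ∑ vy : ZMod q × (M.Y × M.Y),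
        r0 * (M.P (vy.1 + uv.1) a vy.2.1 * M.P uv.1 uv.2 vy.2.2) = (q : ℝ) * r0 := by
      intro uv
      rw [Fintype.sum_prod_type]
      dsimp only
      have h3 : ∀ u1 : ZMod q, ∑ y : M.Y × M.Y,
          r0 * (M.P (u1 + uv.1) a y.1 * M.P uv.1 uv.2 y.2) = r0 :=
        fun u1 => sumYY q hM _ _ _ _ r0
      simp_rw [h3, sum_const_Z]
    simp_rw [h2, sum_const_Z2, hr0]
    field_simp
  set f : ZMod q → (ZMod q × M.Y) → ℝ := fun w xy => M.P xy.1 w xy.2 / (q : ℝ) ^ 2 with hfdef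
  set g : M.Y × (ZMod q × ZMod q) → ℝ :=
    fun yu => ((q : ℝ) ^ 2)⁻¹ * M.P yu.2.1 yu.2.2 yu.1 with hgdef
  have hg : ∑ c, g c = 1 := by
    rw [Fintype.sum_prod_type, Finset.sum_comm]
    have h : ∀ uv : ZMod q × ZMod q, ∑ y, ((q : ℝ) ^ 2)⁻¹ * M.P uv.1 uv.2 y
        = ((q : ℝ) ^ 2)⁻¹ := fun uv => sumY q hM _ _ _
    simp_rw [hgdef, h, sum_const_Z2]
    field_simp
  set e : ((ZMod q × M.Y) × (M.Y × (ZMod q × ZMod q)))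
      ≃ ((ZMod q × (M.Y × M.Y)) × (ZMod q × ZMod q)) :=
    ⟨fun x => ((x.1.1 - x.2.2.1, (x.1.2, x.2.1)), x.2.2),
      fun z => ((z.1.1 + z.2.1, z.1.2.1), (z.1.2.2, z.2)),
      fun x => by obtain ⟨⟨x1, y1⟩, ⟨y2, uv⟩⟩ := x; simp,
      fun z => by obtain ⟨⟨u1, ⟨y1, y2⟩⟩, uv⟩ := z; simp⟩ with hedef
  have hfac : ∀ a bc', p (σ (e bc') a) (e bc') = f a bc'.1 * g bc'.2 := by
    intro a bc'
    obtain ⟨⟨x1, y1⟩, ⟨y2, uv⟩⟩ := bc'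
    have he : e ((x1, y1), (y2, uv)) = ((x1 - uv.1, (y1, y2)), uv) := rfl
    rw [he, hshift]
    dsimp only
    rw [sub_add_cancel]
    simp only [hfdef, hgdef, hr0]
    rw [div_eq_mul_inv]
    ring
  have heq : I2 q (minusT q M) = MIq q (fun a b => ∑ cc, p a (b, cc)) := by
    show MIq q (fun (w : ZMod q) (xy : ZMod q × (M.Y × M.Y)) =>
      (minusT q M).P xy.1 w xy.2 / (q : ℝ) ^ 2) = _
    congr 1
    funext a b
    show (((q : ℝ) ^ 2)⁻¹ * ∑ u₂, ∑ v₂, M.P (b.1 + u₂) (a + v₂) b.2.1 * M.P u₂ v₂ b.2.2)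
        / (q : ℝ) ^ 2 = _
    rw [Fintype.sum_prod_type]
    simp_rw [hpdef, ← Finset.mul_sum]
    rw [hr0, div_eq_mul_inv]
    ring
  calc I2 q (minusT q M) = MIq q (fun a b => ∑ cc, p a (b, cc)) := heq
    _ ≤ MIq q f := key_le q hq p h0 h1 σ hσ f g hg e hfac
    _ = I2 q M := rfl

lemma I2_plus (hM : IsMAC M) : I2 q M ≤ I2 q (plusT q M) := by
  have hq : 1 < q := (Fact.out : Nat.Prime q).one_lt
  have hq0 : (0 : ℝ) < (q : ℝ) := by exact_mod_cast Nat.lt_of_lt_of_le Nat.zero_lt_one hq.le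
  have hqne : ((q : ℝ) ^ 2) ≠ 0 := by positivity
  have hqne' : (q : ℝ) ≠ 0 := ne_of_gt hq0
  set r0 : ℝ := ((q : ℝ) ^ 2)⁻¹ * ((q : ℝ) ^ 2)⁻¹ with hr0
  have hr0nn : (0 : ℝ) ≤ r0 := by rw [hr0]; positivity
  set p : ZMod q → (ZMod q × ((M.Y × M.Y) × (ZMod q × ZMod q))) → ℝ :=
    fun v2 b => r0 * (M.P (b.2.2.1 + b.1) (b.2.2.2 + v2) b.2.1.1 * M.P b.1 v2 b.2.1.2)
    with hpdef
  have h0 : ∀ a b, 0 ≤ p a b := fun a b =>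
    mul_nonneg hr0nn (mul_nonneg (hM.1 _ _ _) (hM.1 _ _ _))
  have hsum1 : ∀ a : ZMod q,
      ∑ b : ZMod q × ((M.Y × M.Y) × (ZMod q × ZMod q)), p a b = (q : ℝ)⁻¹ := by
    intro a
    simp only [hpdef]
    rw [Fintype.sum_prod_type]
    dsimp only
    have h2 : ∀ u2 : ZMod q, ∑ z : (M.Y × M.Y) × (ZMod q × ZMod q),
        r0 * (M.P (z.2.1 + u2) (z.2.2 + a) z.1.1 * M.P u2 a z.1.2)
          = (q : ℝ) ^ 2 * r0 := by
      intro u2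
      rw [Fintype.sum_prod_type]
      dsimp only
      rw [Finset.sum_comm]
      have h3 : ∀ uv : ZMod q × ZMod q, ∑ y : M.Y × M.Y,
          r0 * (M.P (uv.1 + u2) (uv.2 + a) y.1 * M.P u2 a y.2) = r0 :=
        fun uv => sumYY q hM _ _ _ _ r0
      simp_rw [h3, sum_const_Z2]
    simp_rw [h2, sum_const_Z, hr0]
    field_simp
  have h1 : ∑ a, ∑ b : ZMod q × ((M.Y × M.Y) × (ZMod q × ZMod q)), p a b = 1 := by
    simp_rw [hsum1, sum_const_Z]
    field_simp
  set e : ((ZMod q × M.Y) × (M.Y × (ZMod q × ZMod q)))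
      ≃ (ZMod q × ((M.Y × M.Y) × (ZMod q × ZMod q))) :=
    ⟨fun x => (x.1.1, ((x.2.1, x.1.2), x.2.2)),
      fun b => ((b.1, b.2.1.2), (b.2.1.1, b.2.2)),
      fun x => rfl, fun b => rfl⟩ with hedef
  set f : ZMod q → (ZMod q × M.Y) → ℝ := fun w xy => M.P xy.1 w xy.2 / (q : ℝ) ^ 2 with hfdef
  have hf : ∀ a b', f a b' = ∑ c' : M.Y × (ZMod q × ZMod q), p a (e (b', c')) := by
    intro a b'
    have he : ∀ c' : M.Y × (ZMod q × ZMod q), e (b', c') = (b'.1, ((c'.1, b'.2), c'.2)) :=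
      fun _ => rfl
    simp only [he, hpdef]
    rw [Fintype.sum_prod_type]
    dsimp only
    rw [Finset.sum_comm]
    have h : ∀ uv : ZMod q × ZMod q, ∑ y1 : M.Y,
        r0 * (M.P (uv.1 + b'.1) (uv.2 + a) y1 * M.P b'.1 a b'.2)
          = r0 * M.P b'.1 a b'.2 := by
      intro uv
      have hh : ∀ y1, r0 * (M.P (uv.1 + b'.1) (uv.2 + a) y1 * M.P b'.1 a b'.2)
          = (r0 * M.P b'.1 a b'.2) * M.P (uv.1 + b'.1) (uv.2 + a) y1 := fun _ => by ring
      simp_rw [hh, ← Finset.mul_sum, hM.2, mul_one]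
    simp_rw [h, sum_const_Z2, hr0, hfdef]
    field_simp
  have hpeq : I2 q (plusT q M) = MIq q p := by
    show MIq q (fun (w : ZMod q) (xy : ZMod q × ((M.Y × M.Y) × (ZMod q × ZMod q))) =>
      (plusT q M).P xy.1 w xy.2 / (q : ℝ) ^ 2) = _
    congr 1
    funext a b
    show (((q : ℝ) ^ 2)⁻¹ * (M.P (b.2.2.1 + b.1) (b.2.2.2 + a) b.2.1.1 * M.P b.1 a b.2.1.2))
        / (q : ℝ) ^ 2 = _
    simp only [hpdef, hr0]
    rw [div_eq_mul_inv]
    ring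
  calc I2 q M = MIq q f := rfl
    _ ≤ MIq q p := key_ge q hq p h0 h1 e f hf
    _ = I2 q (plusT q M) := hpeq.symm

end Apps

/-- `P⁻` is worse and `P⁺` is better than `P`:
`I⁽ᵅ⁾(P⁻) ≤ I⁽ᵅ⁾(P) ≤ I⁽ᵅ⁾(P⁺)` for `α ∈ {1, 2, 12}`, and consequently
`𝕀(P⁻) ⊆ 𝕀(P) ⊆ 𝕀(P⁺)`. -/
theorem transform_monotone (q : ℕ) [Fact (Nat.Prime q)] (M : MAC q) (hM : IsMAC M) :
    (I1 q (minusT q M) ≤ I1 q M ∧ I1 q M ≤ I1 q (plusT q M)) ∧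
    (I2 q (minusT q M) ≤ I2 q M ∧ I2 q M ≤ I2 q (plusT q M)) ∧
    (I12 q (minusT q M) ≤ I12 q M ∧ I12 q M ≤ I12 q (plusT q M)) ∧
    rateRegion q (minusT q M) ⊆ rateRegion q M ∧
    rateRegion q M ⊆ rateRegion q (plusT q M) := by
  refine ⟨⟨I1_minus q hM, I1_plus q hM⟩, ⟨I2_minus q hM, I2_plus q hM⟩,
    ⟨I12_minus q hM, I12_plus q hM⟩, ?_, ?_⟩
  · intro r hr
    obtain ⟨a1, a2, a3, a4, a5⟩ := hr
    exact ⟨a1, a2.trans (I1_minus q hM), a3, a4.trans (I2_minus q hM),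
      a5.trans (I12_minus q hM)⟩
  · intro r hr
    obtain ⟨a1, a2, a3, a4, a5⟩ := hr
    exact ⟨a1, a2.trans (I1_plus q hM), a3, a4.trans (I2_plus q hM),
      a5.trans (I12_plus q hM)⟩

end PolarMAC
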